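/- arXiv:1601.07760 — 2 statements merged into one kernel-verified Lean document; each statement's English description precedes it below -/
import Mathlib

section
/- For every quaternionic n×n matrix M and every quaternion α, Sdet(αM) = Sdet(Mα) = |α|^{2n}·Sdet(M), where αM (resp. Mα) denotes the matrix with entries α·M_{rs} (resp. M_{rs}·α). -/
open scoped Quaternion

/-- The simplex part of a quaternion `x = a + j·b`: the complex number `a = x₀ + x₁·i`. -/
noncomputable def qSimplex (x : ℍ[ℝ]) : ℂ := ⟨x.re, x.imI⟩

/-- The perplex part of a quaternion `x = a + j·b`: the complex number `b = x₂ − x₃·i`. -/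
noncomputable def qPerplex (x : ℍ[ℝ]) : ℂ := ⟨x.imJ, -x.imK⟩

/-- The simplex part of a quaternionic matrix. -/
noncomputable def matSimplex {α β : Type*} (M : Matrix α β ℍ[ℝ]) : Matrix α β ℂ :=
  Matrix.of fun r s => qSimplex (M r s)

/-- The perplex part of a quaternionic matrix. -/
noncomputable def matPerplex {α β : Type*} (M : Matrix α β ℍ[ℝ]) : Matrix α β ℂ :=
  Matrix.of fun r s => qPerplex (M r s)

/-- The complex-block representation `ψ(M) = [[Mˢ, −conj(Mᵖ)], [Mᵖ, conj(Mˢ)]]`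
of a quaternionic matrix `M = Mˢ + j·Mᵖ`. -/
noncomputable def psi {α β : Type*} (M : Matrix α β ℍ[ℝ]) : Matrix (α ⊕ α) (β ⊕ β) ℂ :=
  Matrix.fromBlocks (matSimplex M) (-(matPerplex M).map (starRingEnd ℂ))
    (matPerplex M) ((matSimplex M).map (starRingEnd ℂ))

/-- The Study determinant of a square quaternionic matrix: `Sdet(M) = det(ψ(M))`. -/
noncomputable def Sdet {α : Type*} [Fintype α] [DecidableEq α] (M : Matrix α α ℍ[ℝ]) : ℂ :=
  (psi M).det

open Matrix in
lemma qSimplex_mul (x y : ℍ[ℝ]) : qSimplex (x*y) = qSimplex x * qSimplex y - (starRingEnd ℂ) (qPerplex x) * qPerplex y := by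
  apply Complex.ext <;>
  simp [qSimplex, qPerplex, Quaternion.re_mul, Quaternion.imI_mul, Quaternion.imJ_mul,
    Quaternion.imK_mul, Complex.mul_re, Complex.mul_im] <;> ring
lemma qPerplex_mul (x y : ℍ[ℝ]) : qPerplex (x*y) = (starRingEnd ℂ) (qSimplex x) * qPerplex y + qPerplex x * qSimplex y := by
  apply Complex.ext <;>
  simp [qSimplex, qPerplex, Quaternion.re_mul, Quaternion.imI_mul, Quaternion.imJ_mul,
    Quaternion.imK_mul, Complex.mul_re, Complex.mul_im] <;> ring
noncomputable def qSimplexHom : ℍ[ℝ] →+ ℂ where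
  toFun := qSimplex
  map_zero' := by apply Complex.ext <;> simp [qSimplex]
  map_add' _ _ := by apply Complex.ext <;> simp [qSimplex] <;> ring
noncomputable def qPerplexHom : ℍ[ℝ] →+ ℂ where
  toFun := qPerplex
  map_zero' := by apply Complex.ext <;> simp [qPerplex]
  map_add' _ _ := by apply Complex.ext <;> simp [qPerplex] <;> ring
lemma matSimplex_mul {n : ℕ} (A B : Matrix (Fin n) (Fin n) ℍ[ℝ]) :
    matSimplex (A * B) = matSimplex A * matSimplex B - (matPerplex A).map (starRingEnd ℂ) * matPerplex B := by
  ext r s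
  simp only [matSimplex, matPerplex, Matrix.mul_apply, Matrix.sub_apply, Matrix.of_apply,
    Matrix.map_apply]
  rw [show qSimplex (∑ k, A r k * B k s) = ∑ k, qSimplex (A r k * B k s) from
    map_sum qSimplexHom _ _, ← Finset.sum_sub_distrib]
  exact Finset.sum_congr rfl fun k _ => qSimplex_mul _ _
lemma matPerplex_mul {n : ℕ} (A B : Matrix (Fin n) (Fin n) ℍ[ℝ]) :
    matPerplex (A * B) = (matSimplex A).map (starRingEnd ℂ) * matPerplex B + matPerplex A * matSimplex B := by
  ext r s
  simp only [matSimplex, matPerplex, Matrix.mul_apply, Matrix.add_apply, Matrix.of_apply,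
    Matrix.map_apply]
  rw [show qPerplex (∑ k, A r k * B k s) = ∑ k, qPerplex (A r k * B k s) from
    map_sum qPerplexHom _ _, ← Finset.sum_add_distrib]
  exact Finset.sum_congr rfl fun k _ => qPerplex_mul _ _

lemma conj_conj_comp : (starRingEnd ℂ : ℂ → ℂ) ∘ (starRingEnd ℂ) = id := by
  funext z; simp

lemma psi_mul {n : ℕ} (A B : Matrix (Fin n) (Fin n) ℍ[ℝ]) : psi (A * B) = psi A * psi B := by
  have hconj : ∀ (X Y : Matrix (Fin n) (Fin n) ℂ),
      (X * Y).map (starRingEnd ℂ) = X.map (starRingEnd ℂ) * Y.map (starRingEnd ℂ) :=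
    fun X Y => Matrix.map_mul
  have e12 : -((matPerplex (A * B)).map (starRingEnd ℂ)) =
      matSimplex A * (-(matPerplex B).map (starRingEnd ℂ)) +
        (-(matPerplex A).map (starRingEnd ℂ)) * (matSimplex B).map (starRingEnd ℂ) := by
    rw [matPerplex_mul, Matrix.map_add _ (fun a b => map_add (starRingEnd ℂ) a b), hconj, hconj, Matrix.map_map, conj_conj_comp,
      Matrix.map_id]
    noncomm_ring
  have e22 : (matSimplex (A * B)).map (starRingEnd ℂ) =
      matPerplex A * (-(matPerplex B).map (starRingEnd ℂ)) +
        (matSimplex A).map (starRingEnd ℂ) * (matSimplex B).map (starRingEnd ℂ) := by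
    rw [matSimplex_mul, Matrix.map_sub _ (fun a b => map_sub (starRingEnd ℂ) a b), hconj, hconj, Matrix.map_map, conj_conj_comp,
      Matrix.map_id]
    noncomm_ring
  have e11 : matSimplex (A * B) =
      matSimplex A * matSimplex B + (-(matPerplex A).map (starRingEnd ℂ)) * matPerplex B := by
    rw [matSimplex_mul]; noncomm_ring
  have e21 : matPerplex (A * B) =
      matPerplex A * matSimplex B + (matSimplex A).map (starRingEnd ℂ) * matPerplex B := by
    rw [matPerplex_mul, add_comm]
  rw [psi, psi, psi, Matrix.fromBlocks_multiply, e12, e22, e11, e21]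

open Kronecker in
lemma det_psi_scalar {n : ℕ} (α : ℍ[ℝ]) :
    (psi (α • (1 : Matrix (Fin n) (Fin n) ℍ[ℝ]))).det = ((‖α‖ ^ (2 * n) : ℝ) : ℂ) := by
  set a := qSimplex α
  set b := qPerplex α
  set K : Matrix (Fin 2) (Fin 2) ℂ := !![a, -(starRingEnd ℂ) b; b, (starRingEnd ℂ) a]
  set e : (Fin n ⊕ Fin n) ≃ (Fin 2 × Fin n) :=
    { toFun := Sum.elim (fun r => (0, r)) (fun r => (1, r))
      invFun := fun p => if p.1 = 0 then Sum.inl p.2 else Sum.inr p.2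
      left_inv := by rintro (r | r) <;> simp
      right_inv := by rintro ⟨i, r⟩; fin_cases i <;> simp }
  have key : psi (α • (1 : Matrix (Fin n) (Fin n) ℍ[ℝ])) =
      (K ⊗ₖ (1 : Matrix (Fin n) (Fin n) ℂ)).submatrix e e := by
    ext i j
    rcases i with r | r <;> rcases j with s | s <;>
      simp [psi, matSimplex, matPerplex, qSimplex, qPerplex, Matrix.one_apply, K, e,
        Matrix.submatrix_apply, Matrix.kroneckerMap_apply, Matrix.fromBlocks] <;>
      by_cases h : r = s <;> simp [h] <;> apply Complex.ext <;> simp [a, b, qSimplex, qPerplex]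
  rw [key, Matrix.det_submatrix_equiv_self, Matrix.det_kronecker, Matrix.det_one, one_pow,
    mul_one, Matrix.det_fin_two_of]
  have hval : a * (starRingEnd ℂ) a - (-(starRingEnd ℂ) b) * b = ((‖α‖ ^ 2 : ℝ) : ℂ) := by
    rw [Complex.mul_conj]
    have : (-(starRingEnd ℂ) b) * b = -((starRingEnd ℂ) b * b) := by ring
    rw [this, mul_comm ((starRingEnd ℂ) b) b, Complex.mul_conj]
    rw [sub_neg_eq_add, ← Complex.ofReal_add]
    congr 1
    have hn : ‖α‖ ^ 2 = Quaternion.normSq α := by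
      rw [Quaternion.normSq_eq_norm_mul_self, sq]
    rw [hn, Quaternion.normSq_def']
    simp [a, b, qSimplex, qPerplex, Complex.normSq_mk]
    ring
  rw [hval, ← Complex.ofReal_pow, ← pow_mul]
  simp [Fintype.card_fin, mul_comm]


theorem sdet_smul {n : ℕ} (M : Matrix (Fin n) (Fin n) ℍ[ℝ]) (α : ℍ[ℝ]) :
    Sdet (Matrix.of fun r s => α * M r s) = ((‖α‖ ^ (2 * n) : ℝ) : ℂ) * Sdet M ∧
    Sdet (Matrix.of fun r s => M r s * α) = ((‖α‖ ^ (2 * n) : ℝ) : ℂ) * Sdet M := by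
  have h1 : (Matrix.of fun r s => α * M r s) = (α • (1 : Matrix (Fin n) (Fin n) ℍ[ℝ])) * M := by
    refine Matrix.ext fun r s => ?_
    simp [Matrix.mul_apply, Matrix.one_apply, ite_mul, mul_ite, Finset.sum_ite_eq,
      smul_eq_mul]
  have h2 : (Matrix.of fun r s => M r s * α) = M * (α • (1 : Matrix (Fin n) (Fin n) ℍ[ℝ])) := by
    refine Matrix.ext fun r s => ?_
    simp [Matrix.mul_apply, Matrix.one_apply, ite_mul, mul_ite, Finset.sum_ite_eq,
      smul_eq_mul]
  constructor
  · rw [h1, Sdet, psi_mul, Matrix.det_mul, det_psi_scalar, ← Sdet]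
  · rw [h2, Sdet, psi_mul, Matrix.det_mul, det_psi_scalar, ← Sdet, mul_comm]
end

section
/- Let A be an m×n quaternionic matrix and B an n×m quaternionic matrix. Then Sdet(I_m − AB) = Sdet(I_n − BA). -/
open scoped Quaternion

lemma qS_mul (x y : ℍ[ℝ]) :
    qSimplex (x * y) = qSimplex x * qSimplex y - (starRingEnd ℂ) (qPerplex x) * qPerplex y := by
  apply Complex.ext <;>
  simp [qSimplex, qPerplex, Quaternion.re_mul, Quaternion.imI_mul, Complex.ext_iff] <;> ring

lemma qP_mul (x y : ℍ[ℝ]) :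
    qPerplex (x * y) = (starRingEnd ℂ) (qSimplex x) * qPerplex y + qPerplex x * qSimplex y := by
  apply Complex.ext <;>
  simp [qSimplex, qPerplex, Quaternion.imJ_mul, Quaternion.imK_mul, Complex.ext_iff] <;> ring

lemma qS_add (x y : ℍ[ℝ]) : qSimplex (x + y) = qSimplex x + qSimplex y := by
  simp [qSimplex, Complex.ext_iff]

lemma qP_add (x y : ℍ[ℝ]) : qPerplex (x + y) = qPerplex x + qPerplex y := by
  simp [qPerplex, Complex.ext_iff, add_comm]

noncomputable def qSHom : ℍ[ℝ] →+ ℂ :=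
  { toFun := qSimplex, map_zero' := by simp [qSimplex, Complex.ext_iff], map_add' := qS_add }

noncomputable def qPHom : ℍ[ℝ] →+ ℂ :=
  { toFun := qPerplex, map_zero' := by simp [qPerplex, Complex.ext_iff], map_add' := qP_add }

lemma qS_sum {ι : Type*} (s : Finset ι) (f : ι → ℍ[ℝ]) :
    qSimplex (∑ i ∈ s, f i) = ∑ i ∈ s, qSimplex (f i) := map_sum qSHom f s

lemma qP_sum {ι : Type*} (s : Finset ι) (f : ι → ℍ[ℝ]) :
    qPerplex (∑ i ∈ s, f i) = ∑ i ∈ s, qPerplex (f i) := map_sum qPHom f s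

lemma psi_mul_s8 {α β γ : Type*} [Fintype β] (M : Matrix α β ℍ[ℝ]) (N : Matrix β γ ℍ[ℝ]) :
    psi (M * N) = psi M * psi N := by
  ext i j
  cases i <;> cases j <;>
  simp [psi, Matrix.mul_apply, Matrix.fromBlocks, Fintype.sum_sum_type, matSimplex, matPerplex,
    qS_mul, qP_mul, qS_sum, qP_sum, Finset.sum_add_distrib, Finset.sum_sub_distrib, map_sum,
    sub_eq_add_neg, add_comm, Finset.sum_neg_distrib]

lemma psi_one {α : Type*} [DecidableEq α] : psi (1 : Matrix α α ℍ[ℝ]) = 1 := by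
  ext i j
  cases i <;> cases j <;>
  simp [psi, Matrix.fromBlocks, matSimplex, matPerplex, Matrix.one_apply, qSimplex, qPerplex,
    apply_ite, Complex.ext_iff] <;> split_ifs <;> simp

lemma psi_sub {α β : Type*} (M N : Matrix α β ℍ[ℝ]) : psi (M - N) = psi M - psi N := by
  ext i j
  cases i <;> cases j <;>
  simp [psi, Matrix.fromBlocks, matSimplex, matPerplex, qSimplex, qPerplex, Complex.ext_iff,
    sub_eq_add_neg, add_comm]


theorem sdet_one_sub_mul_comm {m n : ℕ}
    (A : Matrix (Fin m) (Fin n) ℍ[ℝ]) (B : Matrix (Fin n) (Fin m) ℍ[ℝ]) :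
    Sdet (1 - A * B) = Sdet (1 - B * A) := by
  simp only [Sdet, psi_sub, psi_mul_s8, psi_one]
  exact Matrix.det_one_sub_mul_comm _ _
end
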